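/- Define F : ℝ → ℝ by F(α) = 4√(1+α) + 2√α if α ≤ α₀, F(α) = 4 + 2√(2α) if α₀ < α < 1/2, and F(α) = 2√(6(1+α)) if α ≥ 1/2, where α₀ = (688 − 480√2)/49. Then F is continuous on the interval (0,1], but F is not differentiable at α₀. -/

import Mathlib

open Real Set Filter Topology

noncomputable def doubleBubblePerimeter (α : ℝ) : ℝ :=
  if α ≤ (688 - 480 * Real.sqrt 2) / 49 then
    4 * Real.sqrt (1 + α) + 2 * Real.sqrt α
  else if α < 1 / 2 then 4 + 2 * Real.sqrt (2 * α)
  else 2 * Real.sqrt (6 * (1 + α))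

private lemma s_sq : Real.sqrt 2 ^ 2 = 2 := Real.sq_sqrt (by norm_num)
private lemma s_lb : (1.414 : ℝ) < Real.sqrt 2 := by
  nlinarith [Real.sqrt_nonneg 2, s_sq]
private lemma s_ub : Real.sqrt 2 < 1.415 := by
  nlinarith [Real.sqrt_nonneg 2, s_sq]

private lemma sqrt_a0 :
    Real.sqrt ((688 - 480 * Real.sqrt 2) / 49) = (20 - 12 * Real.sqrt 2) / 7 := by
  rw [show (688 - 480 * Real.sqrt 2) / 49 = ((20 - 12 * Real.sqrt 2) / 7) ^ 2 by
    linear_combination (-144 / 49 : ℝ) * s_sq]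
  exact Real.sqrt_sq (by nlinarith [s_ub])

private lemma sqrt_one_add_a0 :
    Real.sqrt (1 + (688 - 480 * Real.sqrt 2) / 49) = (16 * Real.sqrt 2 - 15) / 7 := by
  rw [show 1 + (688 - 480 * Real.sqrt 2) / 49 = ((16 * Real.sqrt 2 - 15) / 7) ^ 2 by
    linear_combination (-256 / 49 : ℝ) * s_sq]
  exact Real.sqrt_sq (by nlinarith [s_lb])

private lemma sqrt_two_a0 :
    Real.sqrt (2 * ((688 - 480 * Real.sqrt 2) / 49)) = (20 * Real.sqrt 2 - 24) / 7 := by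
  rw [show 2 * ((688 - 480 * Real.sqrt 2) / 49) = ((20 * Real.sqrt 2 - 24) / 7) ^ 2 by
    linear_combination (-400 / 49 : ℝ) * s_sq]
  exact Real.sqrt_sq (by nlinarith [s_lb])

private lemma junction :
    4 * Real.sqrt (1 + (688 - 480 * Real.sqrt 2) / 49)
      + 2 * Real.sqrt ((688 - 480 * Real.sqrt 2) / 49)
    = 4 + 2 * Real.sqrt (2 * ((688 - 480 * Real.sqrt 2) / 49)) := by
  rw [sqrt_a0, sqrt_one_add_a0, sqrt_two_a0]; ring

private lemma a0_lt_half : (688 - 480 * Real.sqrt 2) / 49 < 1 / 2 := by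
  nlinarith [s_lb]

private lemma junction2 :
    (4 : ℝ) + 2 * Real.sqrt (2 * (1 / 2)) = 2 * Real.sqrt (6 * (1 + 1 / 2)) := by
  rw [show (2 : ℝ) * (1 / 2) = 1 by norm_num, Real.sqrt_one,
    show (6 : ℝ) * (1 + 1 / 2) = 3 ^ 2 by norm_num, Real.sqrt_sq (by norm_num : (0:ℝ) ≤ 3)]
  norm_num

private lemma F_cont : Continuous doubleBubblePerimeter := by
  have hrw : doubleBubblePerimeter = fun α =>
      if α ≤ (688 - 480 * Real.sqrt 2) / 49 then
        4 * Real.sqrt (1 + α) + 2 * Real.sqrt α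
      else if α ≤ 1 / 2 then 4 + 2 * Real.sqrt (2 * α)
      else 2 * Real.sqrt (6 * (1 + α)) := by
    funext α
    unfold doubleBubblePerimeter
    by_cases h1 : α ≤ (688 - 480 * Real.sqrt 2) / 49
    · simp [h1]
    · rw [if_neg h1, if_neg h1]
      by_cases h2 : α < 1 / 2
      · rw [if_pos h2, if_pos h2.le]
      · by_cases h3 : α ≤ 1 / 2
        · have hα : α = 1 / 2 := le_antisymm h3 (not_lt.mp h2)
          rw [if_neg h2, if_pos h3, hα, junction2]
        · rw [if_neg h2, if_neg h3]
  rw [hrw]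
  have hc1 : Continuous fun α : ℝ => 4 * Real.sqrt (1 + α) + 2 * Real.sqrt α := by
    fun_prop
  have hc2 : Continuous fun α : ℝ => 4 + 2 * Real.sqrt (2 * α) := by fun_prop
  have hc3 : Continuous fun α : ℝ => 2 * Real.sqrt (6 * (1 + α)) := by fun_prop
  have hG : Continuous fun α : ℝ =>
      if α ≤ 1 / 2 then 4 + 2 * Real.sqrt (2 * α) else 2 * Real.sqrt (6 * (1 + α)) :=
    hc2.if_le hc3 continuous_id continuous_const (fun x hx => by rw [hx]; exact junction2)
  exact hc1.if_le hG continuous_id continuous_const (fun x hx => by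
    rw [hx, if_pos a0_lt_half.le]
    exact junction)

theorem first_phase_transition :
    ContinuousOn doubleBubblePerimeter (Set.Ioc (0 : ℝ) 1) ∧
      ¬ DifferentiableAt ℝ doubleBubblePerimeter ((688 - 480 * Real.sqrt 2) / 49) := by
  refine ⟨F_cont.continuousOn, ?_⟩
  intro hdiff
  set c : ℝ := (688 - 480 * Real.sqrt 2) / 49 with hc
  have hc_pos : 0 < c := by rw [hc]; nlinarith [s_ub]
  have h1c : (1 : ℝ) + c ≠ 0 := by positivity
  have h2c : 2 * c ≠ 0 := by positivity
  -- derivative of branch 1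
  have hd1 : HasDerivAt (fun α : ℝ => 4 * Real.sqrt (1 + α) + 2 * Real.sqrt α)
      (4 * (1 / (2 * Real.sqrt (1 + c))) + 2 * (1 / (2 * Real.sqrt c))) c := by
    have ha : HasDerivAt (fun α : ℝ => Real.sqrt (1 + α)) (1 / (2 * Real.sqrt (1 + c))) c := by
      have := (Real.hasDerivAt_sqrt h1c).comp c ((hasDerivAt_id c).const_add 1)
      simpa [Function.comp_def] using this
    have hb : HasDerivAt (fun α : ℝ => Real.sqrt α) (1 / (2 * Real.sqrt c)) c :=
      Real.hasDerivAt_sqrt hc_pos.ne'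
    exact (ha.const_mul 4).add (hb.const_mul 2)
  -- derivative of branch 2
  have hd2 : HasDerivAt (fun α : ℝ => 4 + 2 * Real.sqrt (2 * α))
      (2 * (1 / (2 * Real.sqrt (2 * c)) * 2)) c := by
    have ha : HasDerivAt (fun α : ℝ => Real.sqrt (2 * α))
        (1 / (2 * Real.sqrt (2 * c)) * 2) c := by
      have h := (Real.hasDerivAt_sqrt h2c).comp c ((hasDerivAt_id c).const_mul 2)
      exact h.congr_deriv (by ring)
    simpa using (ha.const_mul 2).const_add 4
  have hd := hdiff.hasDerivAt
  set d : ℝ := deriv doubleBubblePerimeter c with hdd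
  -- left derivative
  have hleft : HasDerivWithinAt (fun α : ℝ => 4 * Real.sqrt (1 + α) + 2 * Real.sqrt α)
      d (Iic c) c := by
    refine (hd.hasDerivWithinAt).congr (fun y hy => ?_) ?_
    · simp [doubleBubblePerimeter, ← hc, if_pos (mem_Iic.mp hy)]
    · simp [doubleBubblePerimeter, ← hc]
  have e1 : d = 4 * (1 / (2 * Real.sqrt (1 + c))) + 2 * (1 / (2 * Real.sqrt c)) := by
    have hu : UniqueDiffWithinAt ℝ (Iic c) c := uniqueDiffOn_Iic c c (mem_Iic.mpr le_rfl)
    rw [← hleft.derivWithin hu, (hd1.hasDerivWithinAt (s := Iic c)).derivWithin hu]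
  -- right derivative
  have hFc : doubleBubblePerimeter c = 4 + 2 * Real.sqrt (2 * c) := by
    rw [show doubleBubblePerimeter c = 4 * Real.sqrt (1 + c) + 2 * Real.sqrt c by
      simp [doubleBubblePerimeter, ← hc]]
    exact junction
  have hright : HasDerivWithinAt (fun α : ℝ => 4 + 2 * Real.sqrt (2 * α)) d (Ici c) c := by
    refine (hd.hasDerivWithinAt).congr_of_eventuallyEq ?_ hFc.symm
    have hmem : Ico c (1 / 2) ∈ 𝓝[Ici c] c :=
      Ico_mem_nhdsGE a0_lt_half
    filter_upwards [hmem] with x hx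
    rcases eq_or_lt_of_le hx.1 with h | h
    · rw [← h, hFc]
    · simp only [doubleBubblePerimeter, ← hc]
      rw [if_neg (not_le.mpr h), if_pos hx.2]
  have e2 : d = 2 * (1 / (2 * Real.sqrt (2 * c)) * 2) := by
    have hu : UniqueDiffWithinAt ℝ (Ici c) c := uniqueDiffOn_Ici c c (mem_Ici.mpr le_rfl)
    rw [← hright.derivWithin hu, (hd2.hasDerivWithinAt (s := Ici c)).derivWithin hu]
  -- contradiction: the two one-sided derivatives differ
  rw [e1] at e2
  rw [hc] at e2
  rw [sqrt_a0, sqrt_one_add_a0, sqrt_two_a0] at e2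
  have p1 : (0:ℝ) < 16 * Real.sqrt 2 - 15 := by nlinarith [s_lb]
  have p2 : (0:ℝ) < 20 - 12 * Real.sqrt 2 := by nlinarith [s_ub]
  have p3 : (0:ℝ) < 20 * Real.sqrt 2 - 24 := by nlinarith [s_lb]
  have hs2 := s_sq
  field_simp at e2
  have hx : 2 * (16 * √2 - 15) / (20 - √2 * 12) = (5 * √2 + 3) / 2 := by
    rw [div_eq_iff (by nlinarith [s_ub] : (0:ℝ) < 20 - √2 * 12).ne']
    linear_combination 30 * s_sq
  have hy : 2 ^ 2 * (16 * √2 - 15) / (√2 * 20 - 24) = (10 + 3 * √2) / 2 := by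
    rw [div_eq_iff (by nlinarith [s_lb] : (0:ℝ) < √2 * 20 - 24).ne']
    linear_combination (-30) * s_sq
  rw [hx, hy] at e2
  nlinarith [s_lb, s_ub, s_sq, p1, p2, p3]
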